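/- Let ω_x ⊂ (0,1) be a nonempty open set. Then there exists C > 0 such that for every real number z and all functions u ∈ C²([0,1], ℂ), f, g ∈ C¹([0,1], ℂ) satisfying u'' + z u = f + g' on [0,1] and u(0) = u(1) = 0, one has ∫₀¹ |u(x)|² dx ≤ C ( ∫₀¹ ( |f(x)|² + |g(x)|² ) dx + ∫_{ω_x} |u(x)|² dx ). The constant C is independent of z ∈ ℝ. -/

import Mathlib

open MeasureTheory Set intervalIntegral

-- Cauchy-Schwarz with 1 on [0,1]

lemma cs_one {h : ℝ → ℝ} (hc : ContinuousOn h (Icc 0 1))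
    (_hnn : ∀ x ∈ Icc (0:ℝ) 1, 0 ≤ h x) :
    (∫ x in (0:ℝ)..1, h x)^2 ≤ ∫ x in (0:ℝ)..1, (h x)^2 := by
  have h01 : (0:ℝ) ≤ 1 := by norm_num
  have huicc : uIcc (0:ℝ) 1 = Icc 0 1 := uIcc_of_le h01
  have hc' : ContinuousOn h (uIcc (0:ℝ) 1) := by rwa [huicc]
  have hint : IntervalIntegrable h volume 0 1 := hc'.intervalIntegrable
  have hint2 : IntervalIntegrable (fun x => (h x)^2) volume 0 1 :=
    (hc'.pow 2).intervalIntegrable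
  set m := ∫ x in (0:ℝ)..1, h x with hm
  have key : 0 ≤ ∫ x in (0:ℝ)..1, (h x - m)^2 :=
    intervalIntegral.integral_nonneg h01 (fun x _ => sq_nonneg _)
  have e : ∫ x in (0:ℝ)..1, (h x - m)^2
      = (∫ x in (0:ℝ)..1, (h x)^2) - 2*m*m + m^2 := by
    have e0 : EqOn (fun x => (h x - m)^2)
        (fun x => (h x)^2 - (2*m)*(h x) + m^2) (uIcc (0:ℝ) 1) := by
      intro x _; simp only; ring
    rw [intervalIntegral.integral_congr e0]
    rw [intervalIntegral.integral_add ((hint2.sub (hint.const_mul (2*m)))) intervalIntegrable_const]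
    rw [intervalIntegral.integral_sub hint2 (hint.const_mul (2*m))]
    rw [intervalIntegral.integral_const_mul]
    rw [intervalIntegral.integral_const]
    simp [← hm]
  nlinarith [key, e]

-- cubic lower bound for t - sin t on [0,2]
lemma sub_sin_cube {t : ℝ} (h0 : 0 ≤ t) (h2 : t ≤ 2) : t^3/11 ≤ t - Real.sin t := by
  have key : ∀ s ∈ Icc (0:ℝ) t, (9/32)*s^2 ≤ 1 - Real.cos s := by
    intro s hs
    rcases eq_or_lt_of_le hs.1 with h|h
    · simp [← h]
    · have h1 : 0 < s/2 := by linarith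
      have h2' : s/2 ≤ 1 := by
        have := hs.2; linarith
      have hcube := Real.sin_gt_sub_cube h1
      have hsin : 3*s/8 ≤ Real.sin (s/2) := by nlinarith [sq_nonneg (s/2)]
      have hc2 := Real.cos_sq (s/2)
      rw [show 2*(s/2) = s by ring] at hc2
      have hs2 := Real.sin_sq (s/2)
      nlinarith [hsin, h.le, hs2, hc2]
  have hint1 : IntervalIntegrable (fun s => (9/32)*s^2) volume 0 t :=
    (continuous_const.mul (continuous_pow 2)).intervalIntegrable 0 t
  have hint2 : IntervalIntegrable (fun s => 1 - Real.cos s) volume 0 t :=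
    (continuous_const.sub Real.continuous_cos).intervalIntegrable 0 t
  have mono := intervalIntegral.integral_mono_on h0 hint1 hint2 key
  have e1 : ∫ s in (0:ℝ)..t, (9/32)*s^2 = (9/32)*(t^3/3) := by
    rw [intervalIntegral.integral_const_mul]
    rw [integral_pow]
    norm_num
  have e2 : ∫ s in (0:ℝ)..t, (1 - Real.cos s) = t - Real.sin t := by
    rw [intervalIntegral.integral_sub intervalIntegrable_const
      (Real.continuous_cos.intervalIntegrable 0 t)]
    simp [integral_cos]
  rw [e1, e2] at mono
  nlinarith [pow_nonneg h0 3]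

-- lower bound for ∫ sin(μx)^2 over [α,β]
lemma m_lower {α β μ : ℝ} (hαβ : α < β) (hL : β - α ≤ 1) (hμ0 : 0 < μ)
    (hμ : 1/2 ≤ μ^2) :
    (β - α)^3/44 ≤ ∫ x in α..β, Real.sin (μ*x)^2 := by
  set L := β - α with hLdef
  clear_value L
  have hL0 : 0 < L := by rw [hLdef]; linarith
  have hm : ∫ x in α..β, Real.sin (μ*x)^2
      = L/2 + (Real.sin (2*(μ*α)) - Real.sin (2*(μ*β)))/(4*μ) := by
    rw [hLdef]
    rw [intervalIntegral.integral_comp_mul_left (fun y => Real.sin y ^2) hμ0.ne']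
    rw [integral_sin_sq]
    rw [Real.sin_two_mul (μ*α), Real.sin_two_mul (μ*β)]
    field_simp [hμ0.ne']
    have hμi : μ * μ⁻¹ = 1 := mul_inv_cancel₀ hμ0.ne'
    linear_combination (4 * Real.sin (μ * α) * Real.cos (μ * α) - 4 * Real.sin (μ * β) * Real.cos (μ * β) + 4 * μ * β - 4 * μ * α) * hμi
  have hdiff : Real.sin (2*(μ*α)) - Real.sin (2*(μ*β))
      = 2 * Real.sin (μ*(α - β)) * Real.cos (μ*(α+β)) := by
    rw [Real.sin_sub_sin]
    congr 2 <;> ring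
  have habs : |2 * Real.sin (μ*(α - β)) * Real.cos (μ*(α+β))| ≤ 2*|Real.sin (μ*L)| := by
    have h1 : Real.sin (μ*(α-β)) = -Real.sin (μ*L) := by
      rw [show μ*(α-β) = -(μ*L) by rw [hLdef]; ring, Real.sin_neg]
    rw [h1, abs_mul, abs_mul]
    have := Real.abs_cos_le_one (μ*(α+β))
    have h2 : |(2:ℝ)| = 2 := by norm_num
    rw [h2, abs_neg]
    nlinarith [abs_nonneg (Real.sin (μ*L)), abs_nonneg (Real.cos (μ*(α+β)))]
  have h4μ : (0:ℝ) < 4*μ := by positivity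
  have hgen : L/2 - 2*|Real.sin (μ*L)|/(4*μ) ≤ ∫ x in α..β, Real.sin (μ*x)^2 := by
    rw [hm, hdiff]
    have h3 : -(2*|Real.sin (μ*L)|) ≤ 2 * Real.sin (μ*(α - β)) * Real.cos (μ*(α+β)) :=
      neg_le_of_abs_le habs
    have h4 := (div_le_div_iff_of_pos_right h4μ).2 h3
    rw [neg_div] at h4
    linarith
  by_cases hbig : 2 ≤ μ*L
  · have hsb : |Real.sin (μ*L)| ≤ 1 := Real.abs_sin_le_one _
    have hq : 2*|Real.sin (μ*L)|/(4*μ) ≤ L/4 := by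
      rw [div_le_div_iff₀ h4μ (by norm_num)]
      nlinarith
    have hLc : L^3 ≤ L := by
      nlinarith [mul_nonneg hL0.le (sub_nonneg.2 hL),
        mul_nonneg (mul_nonneg hL0.le hL0.le) (sub_nonneg.2 hL)]
    linarith
  · have hμL2 : μ*L ≤ 2 := le_of_not_ge hbig
    have hμL0 : 0 ≤ μ*L := by positivity
    have hsnn : 0 ≤ Real.sin (μ*L) :=
      Real.sin_nonneg_of_nonneg_of_le_pi hμL0 (le_trans hμL2 Real.two_le_pi)
    have hcube := sub_sin_cube hμL0 hμL2
    have heq : L/2 - 2*Real.sin (μ*L)/(4*μ) = (μ*L - Real.sin (μ*L))/(2*μ) := by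
      field_simp; ring
    have h : L^3/44 ≤ (μ*L - Real.sin (μ*L))/(2*μ) := by
      rw [div_le_div_iff₀ (by norm_num) (by positivity)]
      nlinarith [hcube, mul_nonneg (mul_nonneg hμ0.le (pow_nonneg hL0.le 3))
        (by linarith : (0:ℝ) ≤ 4*μ^2 - 2)]
    rw [abs_of_nonneg hsnn] at hgen
    linarith

set_option maxHeartbeats 1000000 in
private lemma coercive_bound
    (z : ℝ) (u f g : ℝ → ℂ)
    (hu : ContDiffOn ℝ 2 u (Icc (0:ℝ) 1))
    (hf : ContDiffOn ℝ 1 f (Icc (0:ℝ) 1))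
    (hg : ContDiffOn ℝ 1 g (Icc (0:ℝ) 1))
    (hpde : ∀ x ∈ Icc (0:ℝ) 1,
      derivWithin (derivWithin u (Icc (0:ℝ) 1)) (Icc (0:ℝ) 1) x + (z : ℂ) * u x
        = f x + derivWithin g (Icc (0:ℝ) 1) x)
    (hu0 : u 0 = 0) (hu1 : u 1 = 0) (hz : z ≤ 1/2) :
    (∫ x in (0:ℝ)..1, ‖u x‖^2) ≤
      16*(∫ x in (0:ℝ)..1, ‖f x‖^2) + 8*(∫ x in (0:ℝ)..1, ‖g x‖^2) := by
  -- basic abbreviations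
  set du := derivWithin u (Icc (0:ℝ) 1) with hdu_def
  set ddu := derivWithin du (Icc (0:ℝ) 1) with hddu_def
  set dg := derivWithin g (Icc (0:ℝ) 1) with hdg_def
  clear_value du ddu dg
  have hUD : UniqueDiffOn ℝ (Icc (0:ℝ) 1) := uniqueDiffOn_Icc one_pos
  have h01 : (0:ℝ) ≤ 1 := by norm_num
  have huicc : uIcc (0:ℝ) 1 = Icc 0 1 := uIcc_of_le h01
  have hcu : ContinuousOn u (Icc (0:ℝ) 1) := hu.continuousOn
  have hcdu1 : ContDiffOn ℝ 1 du (Icc (0:ℝ) 1) := by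
    rw [hdu_def]; exact hu.derivWithin (m := 1) hUD (by norm_num)
  have hcdu : ContinuousOn du (Icc (0:ℝ) 1) := hcdu1.continuousOn
  have hcddu : ContinuousOn ddu (Icc (0:ℝ) 1) := by
    rw [hddu_def]; exact (hcdu1.derivWithin (m := 0) hUD (by norm_num)).continuousOn
  have hcf : ContinuousOn f (Icc (0:ℝ) 1) := hf.continuousOn
  have hcg : ContinuousOn g (Icc (0:ℝ) 1) := hg.continuousOn
  have hcdg : ContinuousOn dg (Icc (0:ℝ) 1) := by
    rw [hdg_def]; exact (hg.derivWithin (m := 0) hUD (by norm_num)).continuousOn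
  have hduD : ∀ x ∈ Ioo (0:ℝ) 1, HasDerivAt u (du x) x := by
    intro x hx
    rw [hdu_def]
    exact (((hu.differentiableOn (by norm_num)) x
        (Ioo_subset_Icc_self hx)).hasDerivWithinAt).hasDerivAt
      (Icc_mem_nhds hx.1 hx.2)
  have hdduD : ∀ x ∈ Ioo (0:ℝ) 1, HasDerivAt du (ddu x) x := by
    intro x hx
    rw [hddu_def]
    exact (((hcdu1.differentiableOn (by norm_num)) x
        (Ioo_subset_Icc_self hx)).hasDerivWithinAt).hasDerivAt
      (Icc_mem_nhds hx.1 hx.2)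
  have hdgD : ∀ x ∈ Ioo (0:ℝ) 1, HasDerivAt g (dg x) x := by
    intro x hx
    rw [hdg_def]
    exact (((hg.differentiableOn (by norm_num)) x
        (Ioo_subset_Icc_self hx)).hasDerivWithinAt).hasDerivAt
      (Icc_mem_nhds hx.1 hx.2)
  have hpde' : ∀ x ∈ Icc (0:ℝ) 1, ddu x = f x + dg x - (z:ℂ) * u x := by
    intro x hx
    have := hpde x hx
    linear_combination this
  have hpde' : ∀ x ∈ Icc (0:ℝ) 1, ddu x = f x + dg x - (z:ℂ) * u x := by
    intro x hx
    have := hpde x hx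
    linear_combination this
  set Fq := ∫ x in (0:ℝ)..1, ‖f x‖^2 with hFqdef
  set G := ∫ x in (0:ℝ)..1, ‖g x‖^2 with hGdef
  have hIntuSq : IntervalIntegrable (fun x => ‖u x‖^2) volume 0 1 :=
    ((hcu.norm.pow 2).mono (by rw [huicc])).intervalIntegrable
  have hIntfSq : IntervalIntegrable (fun x => ‖f x‖^2) volume 0 1 :=
    ((hcf.norm.pow 2).mono (by rw [huicc])).intervalIntegrable
  have hIntgSq : IntervalIntegrable (fun x => ‖g x‖^2) volume 0 1 :=
    ((hcg.norm.pow 2).mono (by rw [huicc])).intervalIntegrable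
  have hFq0 : 0 ≤ Fq := by
    rw [hFqdef]; exact intervalIntegral.integral_nonneg h01 (fun x _ => sq_nonneg _)
  have hG0 : 0 ≤ G := by
    rw [hGdef]; exact intervalIntegral.integral_nonneg h01 (fun x _ => sq_nonneg _)
  clear_value Fq G
  set Nu := ∫ x in (0:ℝ)..1, ‖u x‖^2 with hNudef
  have hNu0 : 0 ≤ Nu := by
    rw [hNudef]
    exact intervalIntegral.integral_nonneg h01 (fun x _ => sq_nonneg _)
  clear_value Nu
  have intCC : ∀ (h : ℝ → ℂ), ContinuousOn h (Icc (0:ℝ) 1) →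
      IntervalIntegrable h volume 0 1 := by
    intro h hh
    exact ((by rw [huicc]; exact hh : ContinuousOn h (uIcc (0:ℝ) 1))).intervalIntegrable
  have intRR : ∀ (h : ℝ → ℝ), ContinuousOn h (Icc (0:ℝ) 1) →
      IntervalIntegrable h volume 0 1 := by
    intro h hh
    exact ((by rw [huicc]; exact hh : ContinuousOn h (uIcc (0:ℝ) 1))).intervalIntegrable
  have ftc01 : ∀ (Φ Φ' : ℝ → ℂ), ContinuousOn Φ (Icc (0:ℝ) 1) →
      (∀ t ∈ Ioo (0:ℝ) 1, HasDerivAt Φ (Φ' t) t) → ContinuousOn Φ' (Icc (0:ℝ) 1) →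
      ∫ t in (0:ℝ)..1, Φ' t = Φ 1 - Φ 0 := by
    intro Φ Φ' hΦ hd hΦ'
    exact integral_eq_sub_of_hasDeriv_right_of_le h01 hΦ
      (fun t ht => (hd t ht).hasDerivWithinAt) (intCC Φ' hΦ')
  set Nu' := ∫ x in (0:ℝ)..1, ‖du x‖^2 with hNu'def
  clear_value Nu'
  have hNu'0 : 0 ≤ Nu' := by
    rw [hNu'def]
    exact intervalIntegral.integral_nonneg h01 (fun x _ => sq_nonneg _)
  -- FTC identities
  have e1 : (∫ t in (0:ℝ)..1, (ddu t * star (u t) + du t * star (du t))) = 0 := by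
    rw [ftc01 (fun y => du y * star (u y))
      (fun t => ddu t * star (u t) + du t * star (du t))
      (hcdu.mul hcu.star)
      (fun t ht => (hdduD t ht).mul ((hduD t ht).star))
      ((hcddu.mul hcu.star).add (hcdu.mul hcdu.star))]
    simp [hu0, hu1]
  have e2 : (∫ t in (0:ℝ)..1, (dg t * star (u t) + g t * star (du t))) = 0 := by
    rw [ftc01 (fun y => g y * star (u y))
      (fun t => dg t * star (u t) + g t * star (du t))
      (hcg.mul hcu.star)
      (fun t ht => (hdgD t ht).mul ((hduD t ht).star))
      ((hcdg.mul hcu.star).add (hcg.mul hcdu.star))]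
    simp [hu0, hu1]
  have hconv : ∀ (w : ℝ → ℂ), (∀ t : ℝ, w t * star (w t) = ((‖w t‖^2 : ℝ) : ℂ)) := by
    intro w t
    rw [← starRingEnd_apply, Complex.mul_conj]
    norm_cast
    rw [Complex.normSq_eq_norm_sq]
  have hA' : (∫ t in (0:ℝ)..1, du t * star (du t)) = ((Nu' : ℝ) : ℂ) := by
    rw [intervalIntegral.integral_congr (g := fun t => ((‖du t‖^2 : ℝ) : ℂ))
      (fun t _ => hconv du t)]
    rw [intervalIntegral.integral_ofReal, hNu'def]
  have hB' : (∫ t in (0:ℝ)..1, u t * star (u t)) = ((Nu : ℝ) : ℂ) := by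
    rw [intervalIntegral.integral_congr (g := fun t => ((‖u t‖^2 : ℝ) : ℂ))
      (fun t _ => hconv u t)]
    rw [intervalIntegral.integral_ofReal, hNudef]
  -- integrability
  have i1 : IntervalIntegrable (fun t => ddu t * star (u t)) volume 0 1 :=
    intCC _ (hcddu.mul hcu.star)
  have i2 : IntervalIntegrable (fun t => du t * star (du t)) volume 0 1 :=
    intCC _ (hcdu.mul hcdu.star)
  have i3 : IntervalIntegrable (fun t => dg t * star (u t)) volume 0 1 :=
    intCC _ (hcdg.mul hcu.star)
  have i4 : IntervalIntegrable (fun t => g t * star (du t)) volume 0 1 :=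
    intCC _ (hcg.mul hcdu.star)
  have i5 : IntervalIntegrable (fun t => f t * star (u t)) volume 0 1 :=
    intCC _ (hcf.mul hcu.star)
  have i6 : IntervalIntegrable (fun t => u t * star (u t)) volume 0 1 :=
    intCC _ (hcu.mul hcu.star)
  set A := ∫ t in (0:ℝ)..1, f t * star (u t) with hAdef
  set Bc := ∫ t in (0:ℝ)..1, g t * star (du t) with hBcdef
  clear_value A Bc
  have e1' : (∫ t in (0:ℝ)..1, ddu t * star (u t)) = -((Nu' : ℝ) : ℂ) := by
    rw [intervalIntegral.integral_add i1 i2, hA'] at e1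
    linear_combination e1
  have e2' : (∫ t in (0:ℝ)..1, dg t * star (u t)) = -Bc := by
    rw [intervalIntegral.integral_add i3 i4] at e2
    rw [hBcdef]
    linear_combination e2
  have e3 : (∫ t in (0:ℝ)..1, ddu t * star (u t))
      = A + (∫ t in (0:ℝ)..1, dg t * star (u t)) - (z:ℂ) * ((Nu : ℝ) : ℂ) := by
    have ec : EqOn (fun t => ddu t * star (u t))
        (fun t => f t * star (u t) + dg t * star (u t) - (z:ℂ) * (u t * star (u t)))
        (uIcc (0:ℝ) 1) := by
      intro t ht
      simp only
      rw [hpde' t (by rwa [huicc] at ht)]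
      ring
    rw [intervalIntegral.integral_congr ec]
    rw [intervalIntegral.integral_sub (i5.add i3) (i6.const_mul ((z:ℂ)))]
    rw [intervalIntegral.integral_add i5 i3]
    rw [intervalIntegral.integral_const_mul, hB', hAdef]
  have hcplx : ((Nu' : ℝ) : ℂ) = (z:ℂ)*((Nu : ℝ) : ℂ) - A + Bc := by
    rw [e1', e2'] at e3
    linear_combination -e3
  have hre : Nu' = z*Nu - A.re + Bc.re := by
    have := congrArg Complex.re hcplx
    simpa using this
  -- bounds on A and Bc
  have hAbound : ‖A‖ ≤ 2*Fq + Nu/8 := by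
    rw [hAdef]
    calc ‖∫ t in (0:ℝ)..1, f t * star (u t)‖ ≤ ∫ t in (0:ℝ)..1, ‖f t * star (u t)‖ :=
          intervalIntegral.norm_integral_le_integral_norm h01
      _ ≤ ∫ t in (0:ℝ)..1, (2*‖f t‖^2 + ‖u t‖^2/8) := by
          apply intervalIntegral.integral_mono_on h01
            (intRR _ (hcf.mul hcu.star).norm)
            (((hIntfSq.const_mul 2)).add (hIntuSq.div_const 8))
          intro t ht
          simp only [Pi.mul_apply, Pi.pow_apply]
          rw [norm_mul, norm_star]
          nlinarith [sq_nonneg (2*‖f t‖ - ‖u t‖/2), norm_nonneg (f t), norm_nonneg (u t)]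
      _ = 2*Fq + Nu/8 := by
          rw [intervalIntegral.integral_add (hIntfSq.const_mul 2) (hIntuSq.div_const 8)]
          rw [intervalIntegral.integral_const_mul, intervalIntegral.integral_div,
            ← hFqdef, ← hNudef]
  have hBbound : ‖Bc‖ ≤ G + Nu'/4 := by
    rw [hBcdef]
    calc ‖∫ t in (0:ℝ)..1, g t * star (du t)‖ ≤ ∫ t in (0:ℝ)..1, ‖g t * star (du t)‖ :=
          intervalIntegral.norm_integral_le_integral_norm h01
      _ ≤ ∫ t in (0:ℝ)..1, (‖g t‖^2 + ‖du t‖^2/4) := by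
          apply intervalIntegral.integral_mono_on h01
            (intRR _ (hcg.mul hcdu.star).norm)
            (hIntgSq.add ((intRR _ (hcdu.norm.pow 2)).div_const 4))
          intro t ht
          simp only [Pi.mul_apply, Pi.pow_apply]
          rw [norm_mul, norm_star]
          nlinarith [sq_nonneg (‖g t‖ - ‖du t‖/2), norm_nonneg (g t), norm_nonneg (du t)]
      _ = G + Nu'/4 := by
          rw [intervalIntegral.integral_add (f := fun t => ‖g t‖^2) (g := fun t => ‖du t‖^2/4) hIntgSq ((intRR _ (hcdu.norm.pow 2)).div_const 4)]
          rw [intervalIntegral.integral_div, ← hGdef, ← hNu'def]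
  -- Poincare
  have hIntndu : IntervalIntegrable (fun t => ‖du t‖) volume 0 1 := intRR _ hcdu.norm
  set Idu := ∫ t in (0:ℝ)..1, ‖du t‖ with hIdudef
  clear_value Idu
  have hI2 : Idu^2 ≤ Nu' := by
    rw [hIdudef, hNu'def]
    exact cs_one hcdu.norm (fun x _ => norm_nonneg _)
  have hpoin : Nu ≤ Nu' := by
    have hpt : ∀ x ∈ Icc (0:ℝ) 1, ‖u x‖^2 ≤ Nu' := by
      intro x hx
      have hux : u x = ∫ t in (0:ℝ)..x, du t := by
        rcases eq_or_lt_of_le hx.1 with h|h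
        · rw [← h]; simp [hu0]
        · have hft := integral_eq_sub_of_hasDeriv_right_of_le h.le
            (hcu.mono (Icc_subset_Icc le_rfl hx.2))
            (fun t ht => (hduD t ⟨ht.1, lt_of_lt_of_le ht.2 hx.2⟩).hasDerivWithinAt)
            (((hcdu.mono (Icc_subset_Icc le_rfl hx.2)).mono
              (by rw [uIcc_of_le h.le] : uIcc (0:ℝ) x ⊆ Icc (0:ℝ) x)).intervalIntegrable)
          rw [hu0, sub_zero] at hft
          exact hft.symm
      have h1 : ‖u x‖ ≤ Idu := by
        rw [hux]
        calc ‖∫ t in (0:ℝ)..x, du t‖ ≤ ∫ t in (0:ℝ)..x, ‖du t‖ :=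
            intervalIntegral.norm_integral_le_integral_norm hx.1
        _ ≤ Idu := by
            rw [hIdudef]
            exact integral_mono_interval le_rfl hx.1 hx.2
              (ae_of_all _ (fun t => norm_nonneg _)) hIntndu
      nlinarith [norm_nonneg (u x), hI2]
    calc Nu = ∫ x in (0:ℝ)..1, ‖u x‖^2 := hNudef
    _ ≤ ∫ _x in (0:ℝ)..1, Nu' :=
        intervalIntegral.integral_mono_on h01 hIntuSq intervalIntegrable_const hpt
    _ = Nu' := by simp
  -- combine
  have hAre : -A.re ≤ 2*Fq + Nu/8 := by
    have := Complex.abs_re_le_norm A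
    cases abs_cases A.re with
    | inl h => linarith [this, h.1]
    | inr h => linarith [this, h.1]
  have hBre : Bc.re ≤ G + Nu'/4 := by
    have := Complex.abs_re_le_norm Bc
    cases abs_cases Bc.re with
    | inl h => linarith [this, h.1]
    | inr h => linarith [this, h.1]
  have hzNu : z*Nu ≤ Nu/2 := by nlinarith [hNu0]
  have hNub : Nu ≤ 16*Fq + 8*G := by linarith [hre, hAre, hBre, hpoin, hzNu]
  exact hNub

set_option maxHeartbeats 1000000 in
private lemma osc_bound
    (α β : ℝ) (hαβ : α < β) (hsub01 : Icc α β ⊆ Icc (0:ℝ) 1)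
    (z : ℝ) (u f g : ℝ → ℂ)
    (hu : ContDiffOn ℝ 2 u (Icc (0:ℝ) 1))
    (hf : ContDiffOn ℝ 1 f (Icc (0:ℝ) 1))
    (hg : ContDiffOn ℝ 1 g (Icc (0:ℝ) 1))
    (hpde : ∀ x ∈ Icc (0:ℝ) 1,
      derivWithin (derivWithin u (Icc (0:ℝ) 1)) (Icc (0:ℝ) 1) x + (z : ℂ) * u x
        = f x + derivWithin g (Icc (0:ℝ) 1) x)
    (hu0 : u 0 = 0) (hu1 : u 1 = 0) (hz : 1/2 < z) :
    (∫ x in (0:ℝ)..1, ‖u x‖^2) ≤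
      (4/((β-α)^3/44))*(∫ x in α..β, ‖u x‖^2)
      + (64/((β-α)^3/44))*((∫ x in (0:ℝ)..1, ‖f x‖^2) + (∫ x in (0:ℝ)..1, ‖g x‖^2))
      + 32*((∫ x in (0:ℝ)..1, ‖f x‖^2) + (∫ x in (0:ℝ)..1, ‖g x‖^2)) := by
  have hα0 : (0:ℝ) ≤ α := (hsub01 ⟨le_refl α, hαβ.le⟩).1
  have hβ1 : β ≤ 1 := (hsub01 ⟨hαβ.le, le_refl β⟩).2
  have hL1 : β - α ≤ 1 := by linarith
  set c₀ : ℝ := (β - α)^3/44 with hc₀def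
  have hc₀ : 0 < c₀ := by
    rw [hc₀def]
    have : 0 < β - α := by linarith
    positivity
  -- basic abbreviations
  set du := derivWithin u (Icc (0:ℝ) 1) with hdu_def
  set ddu := derivWithin du (Icc (0:ℝ) 1) with hddu_def
  set dg := derivWithin g (Icc (0:ℝ) 1) with hdg_def
  clear_value du ddu dg
  have hUD : UniqueDiffOn ℝ (Icc (0:ℝ) 1) := uniqueDiffOn_Icc one_pos
  have h01 : (0:ℝ) ≤ 1 := by norm_num
  have huicc : uIcc (0:ℝ) 1 = Icc 0 1 := uIcc_of_le h01
  have hcu : ContinuousOn u (Icc (0:ℝ) 1) := hu.continuousOn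
  have hcdu1 : ContDiffOn ℝ 1 du (Icc (0:ℝ) 1) := by
    rw [hdu_def]; exact hu.derivWithin (m := 1) hUD (by norm_num)
  have hcdu : ContinuousOn du (Icc (0:ℝ) 1) := hcdu1.continuousOn
  have hcddu : ContinuousOn ddu (Icc (0:ℝ) 1) := by
    rw [hddu_def]; exact (hcdu1.derivWithin (m := 0) hUD (by norm_num)).continuousOn
  have hcf : ContinuousOn f (Icc (0:ℝ) 1) := hf.continuousOn
  have hcg : ContinuousOn g (Icc (0:ℝ) 1) := hg.continuousOn
  have hcdg : ContinuousOn dg (Icc (0:ℝ) 1) := by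
    rw [hdg_def]; exact (hg.derivWithin (m := 0) hUD (by norm_num)).continuousOn
  have hduD : ∀ x ∈ Ioo (0:ℝ) 1, HasDerivAt u (du x) x := by
    intro x hx
    rw [hdu_def]
    exact (((hu.differentiableOn (by norm_num)) x
        (Ioo_subset_Icc_self hx)).hasDerivWithinAt).hasDerivAt
      (Icc_mem_nhds hx.1 hx.2)
  have hdduD : ∀ x ∈ Ioo (0:ℝ) 1, HasDerivAt du (ddu x) x := by
    intro x hx
    rw [hddu_def]
    exact (((hcdu1.differentiableOn (by norm_num)) x
        (Ioo_subset_Icc_self hx)).hasDerivWithinAt).hasDerivAt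
      (Icc_mem_nhds hx.1 hx.2)
  have hdgD : ∀ x ∈ Ioo (0:ℝ) 1, HasDerivAt g (dg x) x := by
    intro x hx
    rw [hdg_def]
    exact (((hg.differentiableOn (by norm_num)) x
        (Ioo_subset_Icc_self hx)).hasDerivWithinAt).hasDerivAt
      (Icc_mem_nhds hx.1 hx.2)
  have hpde' : ∀ x ∈ Icc (0:ℝ) 1, ddu x = f x + dg x - (z:ℂ) * u x := by
    intro x hx
    have := hpde x hx
    linear_combination this
  have hpde' : ∀ x ∈ Icc (0:ℝ) 1, ddu x = f x + dg x - (z:ℂ) * u x := by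
    intro x hx
    have := hpde x hx
    linear_combination this
  set Fq := ∫ x in (0:ℝ)..1, ‖f x‖^2 with hFqdef
  set G := ∫ x in (0:ℝ)..1, ‖g x‖^2 with hGdef
  have hIntuSq : IntervalIntegrable (fun x => ‖u x‖^2) volume 0 1 :=
    ((hcu.norm.pow 2).mono (by rw [huicc])).intervalIntegrable
  have hIntfSq : IntervalIntegrable (fun x => ‖f x‖^2) volume 0 1 :=
    ((hcf.norm.pow 2).mono (by rw [huicc])).intervalIntegrable
  have hIntgSq : IntervalIntegrable (fun x => ‖g x‖^2) volume 0 1 :=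
    ((hcg.norm.pow 2).mono (by rw [huicc])).intervalIntegrable
  have hFq0 : 0 ≤ Fq := by
    rw [hFqdef]; exact intervalIntegral.integral_nonneg h01 (fun x _ => sq_nonneg _)
  have hG0 : 0 ≤ G := by
    rw [hGdef]; exact intervalIntegral.integral_nonneg h01 (fun x _ => sq_nonneg _)
  clear_value Fq G
  set Nu := ∫ x in (0:ℝ)..1, ‖u x‖^2 with hNudef
  have hNu0 : 0 ≤ Nu := by
    rw [hNudef]
    exact intervalIntegral.integral_nonneg h01 (fun x _ => sq_nonneg _)
  clear_value Nu
  have intCC : ∀ (h : ℝ → ℂ), ContinuousOn h (Icc (0:ℝ) 1) →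
      IntervalIntegrable h volume 0 1 := by
    intro h hh
    exact ((by rw [huicc]; exact hh : ContinuousOn h (uIcc (0:ℝ) 1))).intervalIntegrable
  have intRR : ∀ (h : ℝ → ℝ), ContinuousOn h (Icc (0:ℝ) 1) →
      IntervalIntegrable h volume 0 1 := by
    intro h hh
    exact ((by rw [huicc]; exact hh : ContinuousOn h (uIcc (0:ℝ) 1))).intervalIntegrable
  have ftc01 : ∀ (Φ Φ' : ℝ → ℂ), ContinuousOn Φ (Icc (0:ℝ) 1) →
      (∀ t ∈ Ioo (0:ℝ) 1, HasDerivAt Φ (Φ' t) t) → ContinuousOn Φ' (Icc (0:ℝ) 1) →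
      ∫ t in (0:ℝ)..1, Φ' t = Φ 1 - Φ 0 := by
    intro Φ Φ' hΦ hd hΦ'
    exact integral_eq_sub_of_hasDeriv_right_of_le h01 hΦ
      (fun t ht => (hd t ht).hasDerivWithinAt) (intCC Φ' hΦ')
  have hz0 : 0 < z := by linarith
  set μ := Real.sqrt z with hμdef
  have hμ0 : 0 < μ := Real.sqrt_pos.2 hz0
  have hμsq : μ^2 = z := Real.sq_sqrt hz0.le
  have hμ2 : 1/2 ≤ μ^2 := by rw [hμsq]; linarith
  have hzc : (z:ℂ) = (μ:ℂ)^2 := by rw [← hμsq]; push_cast; ring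
  have hμne : (μ:ℂ) ≠ 0 := by exact_mod_cast hμ0.ne'
  set S : ℝ → ℂ := fun x => ((Real.sin (μ*x) / μ : ℝ) : ℂ) with hSdef
  set Cs : ℝ → ℂ := fun x => ((Real.cos (μ*x) : ℝ) : ℂ) with hCdef
  have hSderiv : ∀ x : ℝ, HasDerivAt S (Cs x) x := by
    intro x
    have h1 : HasDerivAt (fun y : ℝ => Real.sin (μ*y)) (Real.cos (μ*x) * μ) x := by
      simpa [Function.comp_def] using (Real.hasDerivAt_sin (μ*x)).comp x ((hasDerivAt_id x).const_mul μ)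
    have h2 := (h1.div_const μ).ofReal_comp
    have h3 : Real.cos (μ*x) * μ / μ = Real.cos (μ*x) := by field_simp
    rw [hSdef, hCdef]
    simpa [h3] using h2
  have hCderiv : ∀ x : ℝ, HasDerivAt Cs (-(μ:ℂ)^2 * S x) x := by
    intro x
    have h1 : HasDerivAt (fun y : ℝ => Real.cos (μ*y)) (-Real.sin (μ*x) * μ) x := by
      simpa [Function.comp_def] using (Real.hasDerivAt_cos (μ*x)).comp x ((hasDerivAt_id x).const_mul μ)
    have h2 := h1.ofReal_comp
    rw [hSdef, hCdef]
    convert h2 using 1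
    push_cast
    field_simp [hμne]
  have hScont : Continuous S := by
    rw [hSdef]
    exact Complex.continuous_ofReal.comp
      ((Real.continuous_sin.comp (continuous_const.mul continuous_id)).div_const μ)
  have hCcont : Continuous Cs := by
    rw [hCdef]
    exact Complex.continuous_ofReal.comp
      (Real.continuous_cos.comp (continuous_const.mul continuous_id))
  have hS0 : S 0 = 0 := by rw [hSdef]; simp
  have hC0 : Cs 0 = 1 := by rw [hCdef]; simp
  have hSnorm : ∀ x : ℝ, ‖S x‖ = |Real.sin (μ*x)|/μ := by
    intro x
    rw [hSdef]
    simp only [Complex.norm_real, Real.norm_eq_abs]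
    rw [abs_div, abs_of_pos hμ0]
  have hSb : ∀ x : ℝ, ‖S x‖ ≤ 1/μ := by
    intro x
    rw [hSnorm x, div_le_div_iff₀ hμ0 hμ0]
    nlinarith [Real.abs_sin_le_one (μ*x), hμ0]
  have hCb : ∀ x : ℝ, ‖Cs x‖ ≤ 1 := by
    intro x
    rw [hCdef]
    simp only [Complex.norm_real, Real.norm_eq_abs]
    exact Real.abs_cos_le_one _
  have hSC1 : ∀ y : ℝ, (μ:ℂ)^2 * S y^2 + Cs y^2 = 1 := by
    intro y
    have h := Real.sin_sq_add_cos_sq (μ*y)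
    have hμne : (μ:ℂ) ≠ 0 := by exact_mod_cast hμ0.ne'
    have hc : ((Real.sin (μ*y) : ℝ) : ℂ)^2 + ((Real.cos (μ*y) : ℝ) : ℂ)^2 = 1 := by
      exact_mod_cast h
    rw [hSdef, hCdef]
    push_cast
    field_simp
    exact Complex.sin_sq_add_cos_sq _
  -- kernel bounds
  have hkb : ∀ x t : ℝ, ‖S x * Cs t - Cs x * S t‖ ≤ 2*(1/μ) := by
    intro x t
    have h1 : ‖S x‖*‖Cs t‖ ≤ (1/μ)*1 :=
      mul_le_mul (hSb x) (hCb t) (norm_nonneg _) (by positivity)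
    have h2 : ‖Cs x‖*‖S t‖ ≤ 1*(1/μ) :=
      mul_le_mul (hCb x) (hSb t) (norm_nonneg _) (by norm_num)
    calc ‖S x * Cs t - Cs x * S t‖ ≤ ‖S x * Cs t‖ + ‖Cs x * S t‖ := norm_sub_le _ _
    _ = ‖S x‖*‖Cs t‖ + ‖Cs x‖*‖S t‖ := by rw [norm_mul, norm_mul]
    _ ≤ 2*(1/μ) := by linarith
  have hdkb : ∀ x t : ℝ, ‖S x * (-(μ:ℂ)^2 * S t) - Cs x * Cs t‖ ≤ 2 := by
    intro x t
    have h1 : ‖S x * (-(μ:ℂ)^2 * S t)‖ = μ^2 * (‖S x‖ * ‖S t‖) := by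
      have hnμ : ‖((μ:ℝ):ℂ)‖ = μ := by
        rw [Complex.norm_real, Real.norm_eq_abs, abs_of_pos hμ0]
      rw [norm_mul, norm_mul, norm_neg, norm_pow, hnμ]
      ring
    have h2 : μ^2*(‖S x‖*‖S t‖) ≤ 1 := by
      have hmm : ‖S x‖*‖S t‖ ≤ (1/μ)*(1/μ) :=
        mul_le_mul (hSb x) (hSb t) (norm_nonneg _) (by positivity)
      have h3 : μ^2*(‖S x‖*‖S t‖) ≤ μ^2*((1/μ)*(1/μ)) :=
        mul_le_mul_of_nonneg_left hmm (sq_nonneg μ)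
      have h4 : μ^2*((1/μ)*(1/μ)) = 1 := by field_simp
      linarith
    have h5 : ‖Cs x * Cs t‖ ≤ 1 := by
      rw [norm_mul]
      nlinarith [hCb x, hCb t, norm_nonneg (Cs x), norm_nonneg (Cs t)]
    calc ‖S x * (-(μ:ℂ)^2 * S t) - Cs x * Cs t‖
        ≤ ‖S x * (-(μ:ℂ)^2 * S t)‖ + ‖Cs x * Cs t‖ := norm_sub_le _ _
    _ ≤ 2 := by rw [h1]; linarith
  set Bv := du 0 - g 0 with hBvdef
  set F : ℝ → ℂ := fun x => ∫ t in (0:ℝ)..x,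
    (f t * (S x * Cs t - Cs x * S t) - g t * (S x * (-(μ:ℂ)^2 * S t) - Cs x * Cs t))
    with hFdef
  have intCCx : ∀ x ∈ Icc (0:ℝ) 1, ∀ (h : ℝ → ℂ), ContinuousOn h (Icc (0:ℝ) 1) →
      IntervalIntegrable h volume 0 x := by
    intro x hx h hh
    exact (hh.mono (by rw [uIcc_of_le hx.1]; exact Icc_subset_Icc le_rfl hx.2)).intervalIntegrable
  have intRRx : ∀ x ∈ Icc (0:ℝ) 1, ∀ (h : ℝ → ℝ), ContinuousOn h (Icc (0:ℝ) 1) →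
      IntervalIntegrable h volume 0 x := by
    intro x hx h hh
    exact (hh.mono (by rw [uIcc_of_le hx.1]; exact Icc_subset_Icc le_rfl hx.2)).intervalIntegrable
  -- the representation
  have hrep : ∀ x ∈ Icc (0:ℝ) 1, u x = Bv * S x + F x := by
    intro x hx
    rcases eq_or_lt_of_le hx.1 with h0|h0
    · rw [← h0]
      rw [hFdef]
      simp [hS0, hu0]
    have hx1 : x ≤ 1 := hx.2
    have hIccsub : Icc (0:ℝ) x ⊆ Icc 0 1 := Icc_subset_Icc le_rfl hx1
    have ftcx : ∀ (Φ Φ' : ℝ → ℂ), ContinuousOn Φ (Icc (0:ℝ) 1) →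
        (∀ t ∈ Ioo (0:ℝ) 1, HasDerivAt Φ (Φ' t) t) → ContinuousOn Φ' (Icc (0:ℝ) 1) →
        ∫ t in (0:ℝ)..x, Φ' t = Φ x - Φ 0 := by
      intro Φ Φ' hΦ hd hΦ'
      exact integral_eq_sub_of_hasDeriv_right_of_le h0.le (hΦ.mono hIccsub)
        (fun t ht => (hd t ⟨ht.1, lt_of_lt_of_le ht.2 hx1⟩).hasDerivWithinAt)
        ((hΦ'.mono (by rw [uIcc_of_le h0.le]; exact hIccsub)).intervalIntegrable)
    have hkcont : Continuous (fun t => S x * Cs t - Cs x * S t) :=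
      (continuous_const.mul hCcont).sub (continuous_const.mul hScont)
    have hdkcont : Continuous (fun t => S x * (-(μ:ℂ)^2 * S t) - Cs x * Cs t) :=
      (continuous_const.mul (continuous_const.mul hScont)).sub
        (continuous_const.mul hCcont)
    have hP : ∫ t in (0:ℝ)..x, ((f t + dg t) * S t) = du x * S x - u x * Cs x := by
      have hmain := ftcx (fun y => du y * S y - u y * Cs y) (fun t => (f t + dg t) * S t)
        ((hcdu.mul hScont.continuousOn).sub (hcu.mul hCcont.continuousOn))
        (fun t ht => by
          have hd := ((hdduD t ht).mul (hSderiv t)).sub ((hduD t ht).mul (hCderiv t))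
          refine hd.congr_deriv ?_
          rw [hpde' t (Ioo_subset_Icc_self ht), hzc]
          ring)
        ((hcf.add hcdg).mul hScont.continuousOn)
      simpa [hS0, hu0] using hmain
    have hQ : ∫ t in (0:ℝ)..x, ((f t + dg t) * Cs t)
        = (du x * Cs x + (μ:ℂ)^2 * (u x * S x)) - du 0 := by
      have hmain := ftcx (fun y => du y * Cs y + (μ:ℂ)^2 * (u y * S y))
        (fun t => (f t + dg t) * Cs t)
        ((hcdu.mul hCcont.continuousOn).add
          (((hcu.mul hScont.continuousOn)).const_smul ((μ:ℂ)^2)))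
        (fun t ht => by
          have hd := ((hdduD t ht).mul (hCderiv t)).add
            (HasDerivAt.const_mul ((μ:ℂ)^2) ((hduD t ht).mul (hSderiv t)))
          refine hd.congr_deriv ?_
          rw [hpde' t (Ioo_subset_Icc_self ht), hzc]
          ring)
        ((hcf.add hcdg).mul hCcont.continuousOn)
      rw [hmain]
      simp only [hS0, hC0, hu0]
      ring
    have hGint : ∫ t in (0:ℝ)..x, (dg t * (S x * Cs t - Cs x * S t)
        + g t * (S x * (-(μ:ℂ)^2 * S t) - Cs x * Cs t)) = -(g 0 * S x) := by
      have hmain := ftcx (fun t => g t * (S x * Cs t - Cs x * S t))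
        (fun t => dg t * (S x * Cs t - Cs x * S t)
          + g t * (S x * (-(μ:ℂ)^2 * S t) - Cs x * Cs t))
        (hcg.mul hkcont.continuousOn)
        (fun t ht => (hdgD t ht).mul
          ((HasDerivAt.const_mul (S x) (hCderiv t)).sub
            (HasDerivAt.const_mul (Cs x) (hSderiv t))))
        ((hcdg.mul hkcont.continuousOn).add (hcg.mul hdkcont.continuousOn))
      rw [hmain]
      simp only [hS0, hC0]
      ring
    -- integrability on [0,x]
    have i_fS : IntervalIntegrable (fun t => (f t + dg t) * S t) volume 0 x := intCCx x hx _ ((hcf.add hcdg).mul hScont.continuousOn)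
    have i_fC : IntervalIntegrable (fun t => (f t + dg t) * Cs t) volume 0 x := intCCx x hx _ ((hcf.add hcdg).mul hCcont.continuousOn)
    have i_fk : IntervalIntegrable (fun t => f t * (S x * Cs t - Cs x * S t)) volume 0 x := intCCx x hx _ (hcf.mul hkcont.continuousOn)
    have i_dgk : IntervalIntegrable (fun t => dg t * (S x * Cs t - Cs x * S t)) volume 0 x := intCCx x hx _ (hcdg.mul hkcont.continuousOn)
    have i_gdk : IntervalIntegrable (fun t => g t * (S x * (-(μ:ℂ)^2 * S t) - Cs x * Cs t)) volume 0 x := intCCx x hx _ (hcg.mul hdkcont.continuousOn)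
    have hQ' : du x * Cs x + (μ:ℂ)^2 * (u x * S x)
        = (∫ t in (0:ℝ)..x, ((f t + dg t) * Cs t)) + du 0 := by
      linear_combination -hQ
    have hP' : du x * S x - u x * Cs x = ∫ t in (0:ℝ)..x, ((f t + dg t) * S t) := hP.symm
    have hdgk : (∫ t in (0:ℝ)..x, dg t * (S x * Cs t - Cs x * S t))
        = -(g 0 * S x) - ∫ t in (0:ℝ)..x, g t * (S x * (-(μ:ℂ)^2 * S t) - Cs x * Cs t) := by
      have hsplit := intervalIntegral.integral_add i_dgk i_gdk
      linear_combination hGint - hsplit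
    calc u x = S x * (du x * Cs x + (μ:ℂ)^2*(u x * S x))
          - Cs x * (du x * S x - u x * Cs x) := by
          linear_combination (-(u x)) * (hSC1 x)
    _ = S x * ((∫ t in (0:ℝ)..x, ((f t + dg t) * Cs t)) + du 0)
          - Cs x * (∫ t in (0:ℝ)..x, ((f t + dg t) * S t)) := by
          rw [← hQ', ← hP']
    _ = du 0 * S x + ((∫ t in (0:ℝ)..x, S x * ((f t + dg t) * Cs t))
          - (∫ t in (0:ℝ)..x, Cs x * ((f t + dg t) * S t))) := by
          rw [intervalIntegral.integral_const_mul, intervalIntegral.integral_const_mul]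
          ring
    _ = du 0 * S x + ∫ t in (0:ℝ)..x, (f t * (S x * Cs t - Cs x * S t)
          + dg t * (S x * Cs t - Cs x * S t)) := by
          rw [← intervalIntegral.integral_sub (i_fC.const_mul (S x)) (i_fS.const_mul (Cs x))]
          congr 1
          apply intervalIntegral.integral_congr
          intro t _
          simp only
          ring
    _ = du 0 * S x + ((∫ t in (0:ℝ)..x, f t * (S x * Cs t - Cs x * S t))
          + (∫ t in (0:ℝ)..x, dg t * (S x * Cs t - Cs x * S t))) := by
          rw [intervalIntegral.integral_add i_fk i_dgk]
    _ = du 0 * S x + ((∫ t in (0:ℝ)..x, f t * (S x * Cs t - Cs x * S t))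
          + (-(g 0 * S x) - ∫ t in (0:ℝ)..x, g t * (S x * (-(μ:ℂ)^2 * S t) - Cs x * Cs t))) := by
          rw [hdgk]
    _ = Bv * S x + ((∫ t in (0:ℝ)..x, f t * (S x * Cs t - Cs x * S t))
          - (∫ t in (0:ℝ)..x, g t * (S x * (-(μ:ℂ)^2 * S t) - Cs x * Cs t))) := by
          rw [hBvdef]
          ring
    _ = Bv * S x + F x := by
          rw [hFdef]
          rw [← intervalIntegral.integral_sub i_fk i_gdk]
  -- L¹ norms of f and g
  set If := ∫ t in (0:ℝ)..1, ‖f t‖ with hIfdef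
  set Ig := ∫ t in (0:ℝ)..1, ‖g t‖ with hIgdef
  have hIf0 : 0 ≤ If := by
    rw [hIfdef]; exact intervalIntegral.integral_nonneg h01 (fun t _ => norm_nonneg _)
  have hIg0 : 0 ≤ Ig := by
    rw [hIgdef]; exact intervalIntegral.integral_nonneg h01 (fun t _ => norm_nonneg _)
  have hIf2 : If^2 ≤ Fq := by
    rw [hIfdef, hFqdef]; exact cs_one hcf.norm (fun t _ => norm_nonneg _)
  have hIg2 : Ig^2 ≤ G := by
    rw [hIgdef, hGdef]; exact cs_one hcg.norm (fun t _ => norm_nonneg _)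
  have ha2 : (1/μ)^2 ≤ 2 := by
    rw [div_pow, div_le_iff₀ (by positivity)]
    nlinarith
  -- bound on F
  have hFbnd : ∀ x ∈ Icc (0:ℝ) 1, ‖F x‖ ≤ 2*(1/μ)*If + 2*Ig := by
    intro x hx
    have hkcont : Continuous (fun t => S x * Cs t - Cs x * S t) :=
      (continuous_const.mul hCcont).sub (continuous_const.mul hScont)
    have hdkcont : Continuous (fun t => S x * (-(μ:ℂ)^2 * S t) - Cs x * Cs t) :=
      (continuous_const.mul (continuous_const.mul hScont)).sub
        (continuous_const.mul hCcont)
    have hptF : ∀ t : ℝ, ‖f t * (S x * Cs t - Cs x * S t)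
        - g t * (S x * (-(μ:ℂ)^2 * S t) - Cs x * Cs t)‖ ≤ 2*(1/μ)*‖f t‖ + 2*‖g t‖ := by
      intro t
      have h1 : ‖f t‖ * ‖S x * Cs t - Cs x * S t‖ ≤ ‖f t‖ * (2*(1/μ)) :=
        mul_le_mul_of_nonneg_left (hkb x t) (norm_nonneg _)
      have h2 : ‖g t‖ * ‖S x * (-(μ:ℂ)^2 * S t) - Cs x * Cs t‖ ≤ ‖g t‖ * 2 :=
        mul_le_mul_of_nonneg_left (hdkb x t) (norm_nonneg _)
      calc ‖f t * (S x * Cs t - Cs x * S t)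
          - g t * (S x * (-(μ:ℂ)^2 * S t) - Cs x * Cs t)‖
          ≤ ‖f t * (S x * Cs t - Cs x * S t)‖
            + ‖g t * (S x * (-(μ:ℂ)^2 * S t) - Cs x * Cs t)‖ := norm_sub_le _ _
      _ = ‖f t‖ * ‖S x * Cs t - Cs x * S t‖
            + ‖g t‖ * ‖S x * (-(μ:ℂ)^2 * S t) - Cs x * Cs t‖ := by
            rw [norm_mul, norm_mul]
      _ ≤ 2*(1/μ)*‖f t‖ + 2*‖g t‖ := by linarith
    have hcont1 : ContinuousOn (fun t => ‖f t * (S x * Cs t - Cs x * S t)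
        - g t * (S x * (-(μ:ℂ)^2 * S t) - Cs x * Cs t)‖) (Icc (0:ℝ) 1) :=
      ((hcf.mul hkcont.continuousOn).sub (hcg.mul hdkcont.continuousOn)).norm
    have hcont2 : ContinuousOn (fun t => 2*(1/μ)*‖f t‖ + 2*‖g t‖) (Icc (0:ℝ) 1) :=
      (continuousOn_const.mul hcf.norm).add (continuousOn_const.mul hcg.norm)
    rw [hFdef]
    calc ‖∫ t in (0:ℝ)..x, (f t * (S x * Cs t - Cs x * S t)
          - g t * (S x * (-(μ:ℂ)^2 * S t) - Cs x * Cs t))‖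
        ≤ ∫ t in (0:ℝ)..x, ‖f t * (S x * Cs t - Cs x * S t)
          - g t * (S x * (-(μ:ℂ)^2 * S t) - Cs x * Cs t)‖ :=
          intervalIntegral.norm_integral_le_integral_norm hx.1
    _ ≤ ∫ t in (0:ℝ)..x, (2*(1/μ)*‖f t‖ + 2*‖g t‖) :=
          intervalIntegral.integral_mono_on hx.1 (intRRx x hx _ hcont1)
            (intRRx x hx _ hcont2) (fun t _ => hptF t)
    _ ≤ ∫ t in (0:ℝ)..1, (2*(1/μ)*‖f t‖ + 2*‖g t‖) :=
          integral_mono_interval le_rfl hx.1 hx.2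
            (ae_of_all _ (fun t => by positivity)) (intRR _ hcont2)
    _ = 2*(1/μ)*If + 2*Ig := by
          rw [intervalIntegral.integral_add ((intRR _ hcf.norm).const_mul _)
            ((intRR _ hcg.norm).const_mul _)]
          rw [intervalIntegral.integral_const_mul, intervalIntegral.integral_const_mul,
            ← hIfdef, ← hIgdef]
  have hF2 : ∀ x ∈ Icc (0:ℝ) 1, ‖F x‖^2 ≤ 16*(Fq+G) := by
    intro x hx
    have h1 := hFbnd x hx
    have h2 : (0:ℝ) ≤ ‖F x‖ := norm_nonneg _
    have hbnn : (0:ℝ) ≤ 2*(1/μ)*If + 2*Ig := by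
      have : (0:ℝ) ≤ 2*(1/μ)*If := by positivity
      linarith
    have hsq : ‖F x‖^2 ≤ (2*(1/μ)*If + 2*Ig)^2 := by nlinarith
    nlinarith [sq_nonneg (2*(1/μ)*If - 2*Ig),
      mul_nonneg (sub_nonneg.2 ha2) (sq_nonneg If), hIf2, hIg2]
  -- upper and lower bounds for Nu
  set Dv := (‖Bv‖/μ)^2 with hDdef
  have hD0 : 0 ≤ Dv := by rw [hDdef]; positivity
  have hBS : ∀ x : ℝ, ‖Bv * S x‖^2 = Dv * Real.sin (μ*x)^2 := by
    intro x
    rw [hDdef, norm_mul, hSnorm x, mul_pow, div_pow, div_pow, sq_abs]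
    ring
  clear_value S Cs Bv F If Ig Dv
  have hub : ∀ x ∈ Icc (0:ℝ) 1, ‖u x‖^2 ≤ 2*Dv + 32*(Fq+G) := by
    intro x hx
    have h1 : ‖u x‖ ≤ ‖Bv*S x‖ + ‖F x‖ := by rw [hrep x hx]; exact norm_add_le _ _
    have h2 : ‖Bv * S x‖^2 ≤ Dv := by
      rw [hBS x]
      nlinarith [Real.sin_sq_le_one (μ*x), hD0, sq_nonneg (Real.sin (μ*x))]
    have h3 := hF2 x hx
    nlinarith [sq_nonneg (‖Bv*S x‖ - ‖F x‖), norm_nonneg (u x), norm_nonneg (Bv*S x),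
      norm_nonneg (F x)]
  have hNu_ub : Nu ≤ 2*Dv + 32*(Fq+G) := by
    calc Nu = ∫ x in (0:ℝ)..1, ‖u x‖^2 := hNudef
    _ ≤ ∫ _x in (0:ℝ)..1, (2*Dv + 32*(Fq+G)) :=
        intervalIntegral.integral_mono_on h01 hIntuSq intervalIntegrable_const hub
    _ = 2*Dv + 32*(Fq+G) := by simp
  have hlow : ∀ x ∈ Icc α β, Dv/2 * Real.sin (μ*x)^2 - 16*(Fq+G) ≤ ‖u x‖^2 := by
    intro x hx
    have hx01 := hsub01 hx
    have h1 : ‖Bv*S x‖ ≤ ‖u x‖ + ‖F x‖ := by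
      have hr := hrep x hx01
      have : Bv * S x = u x - F x := by linear_combination -hr
      rw [this]
      exact norm_sub_le _ _
    have h2 := hF2 x hx01
    have h3 := hBS x
    nlinarith [sq_nonneg (‖u x‖ - ‖F x‖), norm_nonneg (u x), norm_nonneg (F x),
      norm_nonneg (Bv*S x)]
  have hsincont : Continuous (fun x : ℝ => Dv/2*Real.sin (μ*x)^2 - 16*(Fq+G)) :=
    (continuous_const.mul ((Real.continuous_sin.comp
      (continuous_const.mul continuous_id)).pow 2)).sub continuous_const
  have huSqαβ : IntervalIntegrable (fun x => ‖u x‖^2) volume α β :=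
    ((hcu.norm.pow 2).mono (by rw [uIcc_of_le hαβ.le]; exact hsub01)).intervalIntegrable
  have hint1 := intervalIntegral.integral_mono_on hαβ.le
    (hsincont.intervalIntegrable α β) huSqαβ hlow
  have hsin2int : IntervalIntegrable (fun x : ℝ => Dv/2*Real.sin (μ*x)^2) volume α β :=
    (continuous_const.mul ((Real.continuous_sin.comp
      (continuous_const.mul continuous_id)).pow 2)).intervalIntegrable α β
  have hval : ∫ x in α..β, (Dv/2*Real.sin (μ*x)^2 - 16*(Fq+G))
      = Dv/2*(∫ x in α..β, Real.sin (μ*x)^2) - (β-α)*(16*(Fq+G)) := by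
    rw [intervalIntegral.integral_sub hsin2int intervalIntegrable_const]
    rw [intervalIntegral.integral_const_mul, intervalIntegral.integral_const]
    simp [smul_eq_mul]
  rw [hval] at hint1
  have hmB := m_lower hαβ hL1 hμ0 hμ2
  rw [← hc₀def] at hmB
  have hαβ0 : (0:ℝ) ≤ β - α := by linarith
  have hDb : Dv/2*c₀ ≤ (∫ x in α..β, ‖u x‖^2) + 16*(Fq+G) := by
    have hp1 : 0 ≤ Dv/2*((∫ x in α..β, Real.sin (μ*x)^2) - c₀) :=
      mul_nonneg (by linarith) (by linarith)
    have hp2 : 0 ≤ (1-(β-α))*(16*(Fq+G)) :=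
      mul_nonneg (by linarith) (by linarith)
    nlinarith [hint1]
  have hDv : Dv ≤ ((∫ x in α..β, ‖u x‖^2) + 16*(Fq+G))*2/c₀ := by
    rw [le_div_iff₀ hc₀]
    nlinarith [hDb]
  have e : ((∫ x in α..β, ‖u x‖^2) + 16*(Fq+G))*2/c₀
      = (2/c₀)*(∫ x in α..β, ‖u x‖^2) + (32/c₀)*(Fq+G) := by
    field_simp
    ring
  rw [e] at hDv
  have h2Dv : 2*Dv ≤ 2*((2/c₀)*(∫ x in α..β, ‖u x‖^2) + (32/c₀)*(Fq+G)) := by linarith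
  have e2 : 2*((2/c₀)*(∫ x in α..β, ‖u x‖^2) + (32/c₀)*(Fq+G))
      = (4/c₀)*(∫ x in α..β, ‖u x‖^2) + (64/c₀)*(Fq+G) := by
    field_simp
    ring
  linarith [hNu_ub]

theorem one_dim_mode_estimate
    (ωx : Set ℝ) (hωopen : IsOpen ωx) (hωne : ωx.Nonempty)
    (hωsub : ωx ⊆ Ioo (0 : ℝ) 1) :
    ∃ C > 0, ∀ z : ℝ, ∀ u f g : ℝ → ℂ,
      ContDiffOn ℝ 2 u (Icc (0 : ℝ) 1) →
      ContDiffOn ℝ 1 f (Icc (0 : ℝ) 1) →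
      ContDiffOn ℝ 1 g (Icc (0 : ℝ) 1) →
      (∀ x ∈ Icc (0 : ℝ) 1,
        derivWithin (derivWithin u (Icc (0 : ℝ) 1)) (Icc (0 : ℝ) 1) x + (z : ℂ) * u x
          = f x + derivWithin g (Icc (0 : ℝ) 1) x) →
      u 0 = 0 → u 1 = 0 →
      (∫ x in (0 : ℝ)..1, ‖u x‖ ^ 2) ≤
        C * ((∫ x in (0 : ℝ)..1, (‖f x‖ ^ 2 + ‖g x‖ ^ 2)) + ∫ x in ωx, ‖u x‖ ^ 2) := by
  classical
  obtain ⟨x₀, hx₀⟩ := hωne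
  obtain ⟨r, hr0, hball⟩ := Metric.isOpen_iff.1 hωopen x₀ hx₀
  set α : ℝ := x₀ - r/4 with hαdef
  set β : ℝ := x₀ + r/4 with hβdef
  have hαβ : α < β := by rw [hαdef, hβdef]; linarith
  have hsubω : Icc α β ⊆ ωx := by
    intro y hy
    apply hball
    rw [Real.ball_eq_Ioo]
    obtain ⟨h1, h2⟩ := hy
    rw [hαdef] at h1; rw [hβdef] at h2
    constructor <;> linarith
  have hsub01 : Icc α β ⊆ Icc (0:ℝ) 1 := fun y hy =>
    ⟨(hωsub (hsubω hy)).1.le, (hωsub (hsubω hy)).2.le⟩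
  set c₀ : ℝ := (β - α)^3/44 with hc₀def
  have hc₀ : 0 < c₀ := by
    rw [hc₀def]
    have : 0 < β - α := by linarith
    positivity
  refine ⟨48 + 64/c₀, by positivity, ?_⟩
  intro z u f g hu hf hg hpde hu0 hu1
  have h01 : (0:ℝ) ≤ 1 := by norm_num
  have huicc : uIcc (0:ℝ) 1 = Icc 0 1 := uIcc_of_le h01
  have hcu : ContinuousOn u (Icc (0:ℝ) 1) := hu.continuousOn
  have hcf : ContinuousOn f (Icc (0:ℝ) 1) := hf.continuousOn
  have hcg : ContinuousOn g (Icc (0:ℝ) 1) := hg.continuousOn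
  have hIntfSq : IntervalIntegrable (fun x => ‖f x‖^2) volume 0 1 :=
    ((hcf.norm.pow 2).mono (by rw [huicc])).intervalIntegrable
  have hIntgSq : IntervalIntegrable (fun x => ‖g x‖^2) volume 0 1 :=
    ((hcg.norm.pow 2).mono (by rw [huicc])).intervalIntegrable
  have hRsplit : (∫ x in (0:ℝ)..1, (‖f x‖^2 + ‖g x‖^2))
      = (∫ x in (0:ℝ)..1, ‖f x‖^2) + (∫ x in (0:ℝ)..1, ‖g x‖^2) :=
    intervalIntegral.integral_add hIntfSq hIntgSq
  have hFq0 : 0 ≤ ∫ x in (0:ℝ)..1, ‖f x‖^2 :=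
    intervalIntegral.integral_nonneg h01 (fun x _ => sq_nonneg _)
  have hG0 : 0 ≤ ∫ x in (0:ℝ)..1, ‖g x‖^2 :=
    intervalIntegral.integral_nonneg h01 (fun x _ => sq_nonneg _)
  have hW0 : 0 ≤ ∫ x in ωx, ‖u x‖^2 :=
    setIntegral_nonneg hωopen.measurableSet (fun x _ => sq_nonneg _)
  have hOW : (∫ x in α..β, ‖u x‖^2) ≤ ∫ x in ωx, ‖u x‖^2 := by
    rw [intervalIntegral.integral_of_le hαβ.le]
    apply setIntegral_mono_set
    · exact ((hcu.norm.pow 2).integrableOn_Icc).mono_set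
        (hωsub.trans Ioo_subset_Icc_self)
    · exact ae_of_all _ (fun x => sq_nonneg _)
    · exact HasSubset.Subset.eventuallyLE (Ioc_subset_Icc_self.trans hsubω)
  have hO0 : 0 ≤ ∫ x in α..β, ‖u x‖^2 :=
    intervalIntegral.integral_nonneg hαβ.le (fun x _ => sq_nonneg _)
  rw [hRsplit]
  by_cases hz : z ≤ 1/2
  · have h := coercive_bound z u f g hu hf hg hpde hu0 hu1 hz
    have h64 : (0:ℝ) < 64/c₀ := by positivity
    nlinarith [mul_nonneg h64.le (add_nonneg hFq0 hG0), mul_nonneg h64.le hW0]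
  · push_neg at hz
    have h := osc_bound α β hαβ hsub01 z u f g hu hf hg hpde hu0 hu1 hz
    rw [← hc₀def] at h
    have hOW2 : (4/c₀)*(∫ x in α..β, ‖u x‖^2) ≤ (4/c₀)*(∫ x in ωx, ‖u x‖^2) := by
      have h4 : (0:ℝ) ≤ 4/c₀ := by positivity
      exact mul_le_mul_of_nonneg_left hOW h4
    have h60 : 0 ≤ (60/c₀)*(∫ x in ωx, ‖u x‖^2) := by positivity
    have h64a : 0 ≤ (64/c₀)*((∫ x in (0:ℝ)..1, ‖f x‖^2) + (∫ x in (0:ℝ)..1, ‖g x‖^2)) := by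
      positivity
    have hkey : (4/c₀)*(∫ x in ωx, ‖u x‖^2) + (60/c₀)*(∫ x in ωx, ‖u x‖^2)
        = (64/c₀)*(∫ x in ωx, ‖u x‖^2) := by ring
    nlinarith [hW0, add_nonneg hFq0 hG0, mul_nonneg (by positivity : (0:ℝ) ≤ 64/c₀) hW0,
      mul_nonneg (by positivity : (0:ℝ) ≤ 64/c₀) (add_nonneg hFq0 hG0)]
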